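/- With α_t = (H+1)/(H+t) and α_t^i = α_i ∏_{j=i+1}^t (1 - α_j), for every integer t ≥ 1 it holds that 1/√t ≤ Σ_{i=1}^t α_t^i/√i ≤ 2/√t. -/

import Mathlib

open Real Finset

noncomputable def lr (H t : ℕ) : ℝ := (H + 1) / (H + t)

noncomputable def lrWeight (H i t : ℕ) : ℝ :=
  lr H i * ∏ j ∈ Finset.Icc (i + 1) t, (1 - lr H j)

lemma lr_nonneg (H t : ℕ) : 0 ≤ lr H t := by
  unfold lr; positivity

lemma lr_le_one (H t : ℕ) (ht : 1 ≤ t) : lr H t ≤ 1 := by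
  unfold lr
  rw [div_le_one (by positivity)]
  have : (1:ℝ) ≤ t := by exact_mod_cast ht
  linarith

lemma one_sub_lr_nonneg (H t : ℕ) (ht : 1 ≤ t) : 0 ≤ 1 - lr H t := by
  linarith [lr_le_one H t ht]

lemma lrWeight_nonneg (H i t : ℕ) : 0 ≤ lrWeight H i t := by
  unfold lrWeight
  apply mul_nonneg (lr_nonneg H i)
  apply Finset.prod_nonneg
  intro j hj
  exact one_sub_lr_nonneg H j (by have := (Finset.mem_Icc.mp hj).1; omega)

lemma lrWeight_self (H t : ℕ) : lrWeight H t t = lr H t := by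
  unfold lrWeight
  rw [Finset.Icc_eq_empty (by omega), Finset.prod_empty, mul_one]

lemma lrWeight_succ (H i t : ℕ) (hi : i ≤ t) :
    lrWeight H i (t + 1) = lrWeight H i t * (1 - lr H (t + 1)) := by
  unfold lrWeight
  rw [Finset.prod_Icc_succ_top (by omega : i + 1 ≤ t + 1)]
  ring

lemma lr_one (H : ℕ) : lr H 1 = 1 := by
  unfold lr
  rw [Nat.cast_one, div_self (by positivity)]

lemma sum_lrWeight (H : ℕ) : ∀ t, 1 ≤ t →
    ∑ i ∈ Finset.Icc 1 t, lrWeight H i t = 1 := by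
  intro t
  induction t with
  | zero => omega
  | succ n ih =>
    intro _
    rcases Nat.eq_zero_or_pos n with h | hn
    · subst h; simp [lrWeight_self, lr_one]
    · 
      rw [Finset.sum_Icc_succ_top (by omega : 1 ≤ n + 1), lrWeight_self]
      have : ∑ i ∈ Finset.Icc 1 n, lrWeight H i (n + 1)
          = (1 - lr H (n + 1)) * ∑ i ∈ Finset.Icc 1 n, lrWeight H i n := by
        rw [Finset.mul_sum]
        apply Finset.sum_congr rfl
        intro i hi
        rw [lrWeight_succ H i n (Finset.mem_Icc.mp hi).2]
        ring
      rw [this, ih hn]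
      ring

lemma key_ineq (H t : ℕ) (ht : 1 ≤ t) :
    lr H (t + 1) / Real.sqrt (t + 1) + (1 - lr H (t + 1)) * (2 / Real.sqrt t)
      ≤ 2 / Real.sqrt (t + 1) := by
  have hs : (0:ℝ) < Real.sqrt t := Real.sqrt_pos.mpr (by exact_mod_cast Nat.pos_of_ne_zero (by omega))
  have hu : (0:ℝ) < Real.sqrt (t + 1) := Real.sqrt_pos.mpr (by positivity)
  have hst : Real.sqrt t ^ 2 = (t:ℝ) := Real.sq_sqrt (by positivity)
  have hut : Real.sqrt (t + 1) ^ 2 = (t:ℝ) + 1 := Real.sq_sqrt (by positivity)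
  have h2 : Real.sqrt t * Real.sqrt (t + 1) ≤ (t:ℝ) + 1/2 := by
    nlinarith [sq_nonneg (Real.sqrt t - Real.sqrt (t + 1))]
  have hH : (0:ℝ) ≤ H := Nat.cast_nonneg H
  have ht1 : (1:ℝ) ≤ t := by exact_mod_cast ht
  unfold lr
  push_cast
  have hD : (0:ℝ) < (H:ℝ) + (t + 1) := by positivity
  rw [div_div]
  have h1m : 1 - ((H:ℝ) + 1) / ((H:ℝ) + (t + 1)) = (t:ℝ) / ((H:ℝ) + (t+1)) := by
    field_simp
    ring
  rw [h1m]
  have e : (t:ℝ) / ((H:ℝ) + (t + 1)) * (2 / Real.sqrt t)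
      = 2 * Real.sqrt t / ((H:ℝ) + (t + 1)) := by
    rw [div_mul_div_comm]
    rw [div_eq_div_iff (by positivity) (by positivity)]
    nlinarith
  rw [e, div_add_div _ _ (by positivity) (by positivity),
    div_le_div_iff₀ (by positivity) hu]
  nlinarith [mul_pos hs hu, mul_pos hD hu, sq_nonneg (Real.sqrt t * Real.sqrt (t+1))]

theorem lrWeight_sum_inv_sqrt (H : ℕ) (hH : 1 ≤ H) (t : ℕ) (ht : 1 ≤ t) :
    1 / Real.sqrt t ≤ ∑ i ∈ Finset.Icc 1 t, lrWeight H i t / Real.sqrt i ∧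
      ∑ i ∈ Finset.Icc 1 t, lrWeight H i t / Real.sqrt i ≤ 2 / Real.sqrt t := by
  constructor
  · have hs : (0:ℝ) < Real.sqrt t := Real.sqrt_pos.mpr (by exact_mod_cast Nat.pos_of_ne_zero (by omega))
    calc 1 / Real.sqrt t
        = ∑ i ∈ Finset.Icc 1 t, lrWeight H i t / Real.sqrt t := by
          rw [← Finset.sum_div, sum_lrWeight H t ht]
      _ ≤ ∑ i ∈ Finset.Icc 1 t, lrWeight H i t / Real.sqrt i := by
          apply Finset.sum_le_sum
          intro i hi
          obtain ⟨hi1, hi2⟩ := Finset.mem_Icc.mp hi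
          have hsi : (0:ℝ) < Real.sqrt i := Real.sqrt_pos.mpr (by exact_mod_cast Nat.pos_of_ne_zero (by omega))
          apply div_le_div_of_nonneg_left (lrWeight_nonneg H i t) hsi
          exact Real.sqrt_le_sqrt (by exact_mod_cast hi2)
  · clear ht
    induction t with
    | zero => simp
    | succ n ih =>
      rcases Nat.eq_zero_or_pos n with h | hn
      · subst h
        norm_num [lrWeight_self, lr_one]
      · rw [Finset.sum_Icc_succ_top (by omega : 1 ≤ n + 1), lrWeight_self]
        have e : ∑ i ∈ Finset.Icc 1 n, lrWeight H i (n + 1) / Real.sqrt i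
            = (1 - lr H (n + 1)) * ∑ i ∈ Finset.Icc 1 n, lrWeight H i n / Real.sqrt i := by
          rw [Finset.mul_sum]
          apply Finset.sum_congr rfl
          intro i hi
          rw [lrWeight_succ H i n (Finset.mem_Icc.mp hi).2]
          ring
        rw [e]
        have h1 : (1 - lr H (n + 1)) * ∑ i ∈ Finset.Icc 1 n, lrWeight H i n / Real.sqrt i
            ≤ (1 - lr H (n + 1)) * (2 / Real.sqrt n) :=
          mul_le_mul_of_nonneg_left ih (one_sub_lr_nonneg H (n + 1) (by omega))
        push_cast
        linarith [h1, key_ineq H n hn]
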